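/- For every integer n ≥ 2 that is a perfect square, 2^{ω(n)} ≤ τ^(e)(n) ≤ 2^{Ω(n)}, where ω(n) is the number of distinct prime factors of n and Ω(n) is the number of prime factors counted with multiplicity. -/

import Mathlib

open Finset

/-- The number of exponential divisors of n. -/
def taue (n : ℕ) : ℕ := ∏ p ∈ n.primeFactors, (n.factorization p).divisors.card

/-- For every perfect square n ≥ 2, 2^ω(n) ≤ τ^(e)(n) ≤ 2^Ω(n). -/
theorem two_pow_omega_le_taue (n : ℕ) (hn : 2 ≤ n) (hsq : IsSquare n) :
    2 ^ n.primeFactors.card ≤ taue n ∧ taue n ≤ 2 ^ n.primeFactorsList.length := by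
  have hn0 : n ≠ 0 := by omega
  have hlen : n.primeFactorsList.length = ∑ p ∈ n.primeFactors, n.factorization p := by
    rw [Nat.primeFactors]
    rw [show (n.primeFactorsList.length) = Multiset.card (↑n.primeFactorsList : Multiset ℕ)
      from rfl]
    rw [← Multiset.toFinset_sum_count_eq (↑n.primeFactorsList : Multiset ℕ)]
    apply Finset.sum_congr rfl
    intro p _
    rw [Multiset.coe_count, Nat.primeFactorsList_count_eq]
  constructor
  · rw [taue, ← Finset.prod_const]
    apply Finset.prod_le_prod (fun _ _ => by positivity)
    intro p hp
    set a := n.factorization p with ha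
    have hne : a ≠ 0 := by
      have := Nat.support_factorization n ▸ hp
      exact Finsupp.mem_support_iff.mp (by rwa [Nat.support_factorization])
    have heven : Even a := by
      obtain ⟨c, rfl⟩ := hsq
      rw [ha, ← pow_two, Nat.factorization_pow]
      exact ⟨c.factorization p, by simp [two_mul]⟩
    have ha2 : 2 ≤ a := by
      rcases heven with ⟨k, hk⟩; omega
    have hsub : ({1, a} : Finset ℕ) ⊆ a.divisors := by
      intro d hd
      simp only [Finset.mem_insert, Finset.mem_singleton] at hd
      rcases hd with rfl | rfl
      · exact Nat.one_mem_divisors.mpr hne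
      · exact Nat.mem_divisors_self a hne
    calc 2 = ({1, a} : Finset ℕ).card := by
            rw [Finset.card_insert_of_notMem (by simp; omega), Finset.card_singleton]
      _ ≤ a.divisors.card := Finset.card_le_card hsub
  · rw [taue, hlen, ← Finset.prod_pow_eq_pow_sum]
    apply Finset.prod_le_prod (fun _ _ => Nat.zero_le _)
    intro p hp
    set a := n.factorization p
    calc a.divisors.card ≤ (Finset.Icc 1 a).card := by
            apply Finset.card_le_card
            intro d hd
            rw [Finset.mem_Icc]
            exact ⟨Nat.pos_of_mem_divisors hd, Nat.divisor_le hd⟩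
      _ = a := by rw [Nat.card_Icc]; omega
      _ ≤ 2 ^ a := Nat.le_of_lt (Nat.lt_two_pow_self (n := a))
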